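/- Let Q ≥ 1 be an integer, let X be a Gamma(Q,1)-distributed real random variable and Y an Exp(1)-distributed real random variable, with X and Y independent. Then the law of X·Y is absolutely continuous with respect to Lebesgue measure, with density f(x) = (2/Γ(Q))·x^{(Q-1)/2}·K_{Q-1}(2√x) for x > 0 (and 0 for x ≤ 0). -/

import Mathlib

open MeasureTheory ProbabilityTheory

/-- The modified Bessel function of the second kind, via its integral representation
`K_ν(x) = ∫₀^∞ exp(−x cosh t) cosh(ν t) dt`. -/
noncomputable def besselK (ν x : ℝ) : ℝ :=
  ∫ t in Set.Ioi (0 : ℝ), Real.exp (-x * Real.cosh t) * Real.cosh (ν * t)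

open Real Set

lemma besselK_integrable (ν : ℝ) {a : ℝ} (ha : 0 < a) :
    IntegrableOn (fun t => Real.exp (-a * Real.cosh t) * Real.cosh (ν * t)) (Set.Ioi 0) := by
  set b : ℝ := |ν| + 1 with hb
  have hb0 : 0 < b := by positivity
  set C : ℝ := 2 * b ^ 2 / a with hC
  have hg : IntegrableOn (fun t => Real.exp C * Real.exp (-1 * t)) (Set.Ioi 0) :=
    (exp_neg_integrableOn_Ioi 0 one_pos).const_mul _
  refine Integrable.mono hg ?_ ?_
  · exact ((continuous_exp.comp (continuous_const.mul Real.continuous_cosh)).mul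
      (Real.continuous_cosh.comp (continuous_const.mul continuous_id))).aestronglyMeasurable
  · filter_upwards [ae_restrict_mem measurableSet_Ioi] with t ht
    have ht0 : (0:ℝ) ≤ t := le_of_lt ht
    have h1 : Real.cosh (ν * t) ≤ Real.exp (|ν| * t) := by
      rw [Real.cosh_eq]
      have e1 : Real.exp (ν * t) ≤ Real.exp (|ν| * t) :=
        Real.exp_le_exp.mpr (by nlinarith [le_abs_self ν])
      have e2 : Real.exp (-(ν * t)) ≤ Real.exp (|ν| * t) :=
        Real.exp_le_exp.mpr (by nlinarith [neg_abs_le ν])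
      linarith
    have h2 : t ^ 2 / 8 ≤ Real.cosh t := by
      have := Real.add_one_le_exp (t/2)
      have hc : Real.exp t / 2 ≤ Real.cosh t := by
        rw [Real.cosh_eq]
        have := Real.exp_pos (-t)
        linarith
      have he : (1 + t/2)^2 ≤ Real.exp t := by
        have h1' : Real.exp t = (Real.exp (t/2))^2 := by
          rw [← Real.exp_nat_mul]; norm_num; ring_nf
        rw [h1']
        have : (0:ℝ) ≤ 1 + t/2 := by linarith
        nlinarith
      nlinarith
    have key : |ν| * t + t - a * Real.cosh t ≤ C := by
      have h3 : a * (t ^ 2 / 8) ≤ a * Real.cosh t := by nlinarith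
      have : b * t ≤ a * t^2 / 8 + 2 * b^2 / a := by
        have expand : a * t^2 / 8 + 2 * b^2 / a - b * t = (a*t - 4*b)^2 / (8*a) := by
          field_simp; ring
        rw [← sub_nonneg, expand]
        positivity
      rw [hC, hb]
      nlinarith
    have hnn : (0:ℝ) ≤ Real.exp (-a * Real.cosh t) * Real.cosh (ν * t) := by
      positivity
    rw [Real.norm_eq_abs, abs_of_nonneg hnn, Real.norm_eq_abs, abs_of_nonneg (by positivity)]
    calc Real.exp (-a * Real.cosh t) * Real.cosh (ν * t)
        ≤ Real.exp (-a * Real.cosh t) * Real.exp (|ν| * t) := by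
          exact mul_le_mul_of_nonneg_left h1 (Real.exp_pos _).le
      _ = Real.exp (|ν| * t - a * Real.cosh t) := by rw [← Real.exp_add]; ring_nf
      _ ≤ Real.exp (C - t) := Real.exp_le_exp.mpr (by linarith)
      _ = Real.exp C * Real.exp (-1 * t) := by rw [← Real.exp_add]; ring_nf

lemma lintegral_exp_cosh (ν : ℝ) {a : ℝ} (ha : 0 < a) :
    ∫⁻ t, ENNReal.ofReal (Real.exp (ν * t) * Real.exp (-a * Real.cosh t)) =
      ENNReal.ofReal (2 * besselK ν a) := by
  have hmeas : Measurable fun t : ℝ => ENNReal.ofReal (Real.exp (ν * t) * Real.exp (-a * Real.cosh t)) := by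
    apply Measurable.ennreal_ofReal
    exact ((Real.continuous_exp.comp (continuous_const.mul continuous_id)).mul
      (Real.continuous_exp.comp (continuous_const.mul Real.continuous_cosh))).measurable
  rw [← lintegral_add_compl (μ := volume)
      (fun t => ENNReal.ofReal (Real.exp (ν * t) * Real.exp (-a * Real.cosh t)))
      (measurableSet_Ioi (a := (0:ℝ)))]
  have hcompl : ∫⁻ t in (Set.Ioi (0:ℝ))ᶜ, ENNReal.ofReal (Real.exp (ν * t) * Real.exp (-a * Real.cosh t)) =
      ∫⁻ t in Set.Ioi (0:ℝ), ENNReal.ofReal (Real.exp (ν * -t) * Real.exp (-a * Real.cosh t)) := by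
    rw [compl_Ioi]
    have := MeasurePreserving.setLIntegral_comp_preimage_emb
      (Measure.measurePreserving_neg (volume : Measure ℝ))
      (MeasurableEquiv.neg ℝ).measurableEmbedding
      (fun t => ENNReal.ofReal (Real.exp (ν * t) * Real.exp (-a * Real.cosh t)))
      (Set.Iic (0:ℝ))
    have hpre : (Neg.neg : ℝ → ℝ) ⁻¹' Set.Iic 0 = Set.Ici 0 := by
      ext x; simp
    rw [hpre] at this
    rw [← this]
    rw [← setLIntegral_congr (Ioi_ae_eq_Ici (μ := volume) (a := (0:ℝ)))]
    apply setLIntegral_congr_fun measurableSet_Ioi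
    intro t _
    beta_reduce
    rw [Real.cosh_neg]
  rw [hcompl, ← lintegral_add_left hmeas]
  have hpt : ∫⁻ t in Set.Ioi (0:ℝ),
      (ENNReal.ofReal (Real.exp (ν * t) * Real.exp (-a * Real.cosh t)) +
        ENNReal.ofReal (Real.exp (ν * -t) * Real.exp (-a * Real.cosh t))) =
      ∫⁻ t in Set.Ioi (0:ℝ),
        ENNReal.ofReal (2 * (Real.exp (-a * Real.cosh t) * Real.cosh (ν * t))) := by
    apply setLIntegral_congr_fun measurableSet_Ioi
    intro t _
    beta_reduce
    rw [← ENNReal.ofReal_add (by positivity) (by positivity)]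
    congr 1
    rw [mul_neg, Real.cosh_eq (ν * t)]
    ring
  rw [hpt, ← ofReal_integral_eq_lintegral_ofReal]
  · rw [MeasureTheory.integral_const_mul]
    rfl
  · exact (besselK_integrable ν ha).const_mul 2
  · filter_upwards with t
    positivity

lemma lintegral_image_1d {s : Set ℝ} {f f' : ℝ → ℝ} (hs : MeasurableSet s)
    (hf' : ∀ x ∈ s, HasDerivWithinAt f (f' x) s x) (hf : Set.InjOn f s) (g : ℝ → ENNReal) :
    ∫⁻ x in f '' s, g x = ∫⁻ x in s, ENNReal.ofReal |f' x| * g (f x) := by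
  simpa only [ContinuousLinearMap.det_toSpanSingleton] using
    MeasureTheory.lintegral_image_eq_lintegral_abs_det_fderiv_mul volume hs
      (fun x hx => (hf' x hx).hasFDerivWithinAt) hf g

lemma key_lintegral (ν : ℝ) {z : ℝ} (hz : 0 < z) :
    ∫⁻ x in Set.Ioi (0:ℝ),
        ENNReal.ofReal (x ^ ν * Real.exp (-x) * x⁻¹ * Real.exp (-(z / x))) =
      ENNReal.ofReal (2 * z ^ (ν / 2) * besselK ν (2 * Real.sqrt z)) := by
  set c : ℝ := Real.sqrt z with hcdef
  have hc : 0 < c := Real.sqrt_pos.mpr hz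
  have hcz : c * c = z := Real.mul_self_sqrt hz.le
  have himg : (fun t : ℝ => c * Real.exp t) '' Set.univ = Set.Ioi 0 := by
    rw [Set.image_univ]
    ext x
    simp only [Set.mem_range, Set.mem_Ioi]
    constructor
    · rintro ⟨t, rfl⟩; positivity
    · intro hx
      exact ⟨Real.log (x / c), by rw [Real.exp_log (by positivity)]; field_simp⟩
  have hderiv : ∀ t ∈ Set.univ, HasDerivWithinAt (fun t : ℝ => c * Real.exp t)
      (c * Real.exp t) Set.univ t :=
    fun t _ => ((Real.hasDerivAt_exp t).const_mul c).hasDerivWithinAt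
  have hinj : Set.InjOn (fun t : ℝ => c * Real.exp t) Set.univ := by
    intro a _ b _ h
    exact Real.exp_injective (mul_left_cancel₀ hc.ne' h)
  rw [← himg, lintegral_image_1d MeasurableSet.univ hderiv hinj, Measure.restrict_univ]
  have hpt : ∀ t : ℝ,
      ENNReal.ofReal |c * Real.exp t| *
        ENNReal.ofReal ((c * Real.exp t) ^ ν * Real.exp (-(c * Real.exp t)) *
          (c * Real.exp t)⁻¹ * Real.exp (-(z / (c * Real.exp t)))) =
      ENNReal.ofReal (c ^ ν) *
        ENNReal.ofReal (Real.exp (ν * t) * Real.exp (-(2 * c) * Real.cosh t)) := by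
    intro t
    have he : (0:ℝ) < c * Real.exp t := by positivity
    rw [abs_of_pos he, ← ENNReal.ofReal_mul he.le, ← ENNReal.ofReal_mul (by positivity)]
    congr 1
    have h1 : z / (c * Real.exp t) = c * Real.exp (-t) := by
      rw [Real.exp_neg]; field_simp; nlinarith
    have h2 : (c * Real.exp t) ^ ν = c ^ ν * Real.exp (ν * t) := by
      rw [Real.mul_rpow hc.le (Real.exp_pos t).le,
        Real.rpow_def_of_pos (Real.exp_pos t), Real.log_exp, mul_comm t ν]
    have h3 : Real.exp (-(c * Real.exp t)) * Real.exp (-(c * Real.exp (-t))) =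
        Real.exp (-(2 * c) * Real.cosh t) := by
      rw [← Real.exp_add, Real.cosh_eq]; ring_nf
    rw [h1, h2]
    rw [neg_mul (2*c)] at h3
    field_simp
    rw [mul_comm c 2]; exact h3
  simp_rw [hpt]
  rw [lintegral_const_mul' _ _ ENNReal.ofReal_ne_top, lintegral_exp_cosh ν (by positivity),
    ← ENNReal.ofReal_mul (by positivity)]
  congr 1
  have : c ^ ν = z ^ (ν / 2) := by
    rw [hcdef, Real.sqrt_eq_rpow, ← Real.rpow_mul hz.le]
    ring_nf
  rw [this]; ring

lemma lintegral_comp_mul_left (g : ℝ → ENNReal) (hg : Measurable g) {x : ℝ} (hx : 0 < x) :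
    ∫⁻ y, g (x * y) = ENNReal.ofReal x⁻¹ * ∫⁻ y, g y := by
  have := lintegral_map hg (measurable_const_mul x) (μ := (volume : Measure ℝ))
  rw [← this, Real.map_volume_mul_left hx.ne', lintegral_smul_measure,
    abs_of_pos (inv_pos.mpr hx), smul_eq_mul]

theorem stmt_5 (Q : ℕ) (hQ : 1 ≤ Q)
    {Ω : Type*} [MeasureSpace Ω] [IsProbabilityMeasure (ℙ : Measure Ω)]
    (X Y : Ω → ℝ)
    (hX : Measure.map X ℙ = gammaMeasure Q 1)
    (hY : Measure.map Y ℙ = expMeasure 1)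
    (hXY : IndepFun X Y) :
    Measure.map (fun ω => X ω * Y ω) ℙ =
      volume.withDensity (fun x =>
        ENNReal.ofReal
          (if 0 < x then
            (2 / Real.Gamma Q) * x ^ (((Q : ℝ) - 1) / 2) * besselK ((Q : ℝ) - 1) (2 * Real.sqrt x)
          else 0)) := by
  have hQR : (0:ℝ) < (Q:ℝ) := by exact_mod_cast hQ
  haveI hPG : IsProbabilityMeasure (gammaMeasure Q 1) := isProbabilityMeasure_gammaMeasure hQR one_pos
  haveI hPE : IsProbabilityMeasure (expMeasure 1) := isProbabilityMeasure_expMeasure one_pos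
  -- measurability of X and Y
  have hXm : AEMeasurable X ℙ := by
    by_contra h
    rw [Measure.map_of_not_aemeasurable h] at hX
    have h1 := hPG.measure_univ
    rw [← hX] at h1
    simp at h1
  have hYm : AEMeasurable Y ℙ := by
    by_contra h
    rw [Measure.map_of_not_aemeasurable h] at hY
    have h1 := hPE.measure_univ
    rw [← hY] at h1
    simp at h1
  have hpair : Measure.map (fun ω => (X ω, Y ω)) ℙ = (gammaMeasure Q 1).prod (expMeasure 1) := by
    rw [← hX, ← hY]
    exact (indepFun_iff_map_prod_eq_prod_map_map hXm hYm).mp hXY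
  have hcomp : Measure.map (fun ω => X ω * Y ω) ℙ =
      Measure.map (fun p : ℝ × ℝ => p.1 * p.2) ((gammaMeasure Q 1).prod (expMeasure 1)) := by
    rw [← hpair, AEMeasurable.map_map_of_aemeasurable measurable_mul.aemeasurable
      (hXm.prodMk hYm)]
    rfl
  rw [hcomp]
  ext s hs
  rw [Measure.map_apply measurable_mul hs, withDensity_apply _ hs]
  have hsmul : MeasurableSet ((fun p : ℝ × ℝ => p.1 * p.2) ⁻¹' s) := measurable_mul hs
  rw [Measure.prod_apply hsmul]
  set F : ℝ → ENNReal := fun x =>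
    (expMeasure 1) (Prod.mk x ⁻¹' ((fun p : ℝ × ℝ => p.1 * p.2) ⁻¹' s)) with hF
  have hFmeas : Measurable F := measurable_measure_prodMk_left hsmul
  have hGamma : gammaMeasure Q 1 = volume.withDensity (gammaPDF Q 1) := rfl
  have hgpdfm : Measurable (gammaPDF (Q:ℝ) 1) := (measurable_gammaPDFReal Q 1).ennreal_ofReal
  have hepdfm : Measurable (gammaPDF (1:ℝ) 1) := (measurable_gammaPDFReal 1 1).ennreal_ofReal
  rw [hGamma, lintegral_withDensity_eq_lintegral_mul _ hgpdfm hFmeas]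
  -- the inner function: for x > 0
  have hFx : ∀ x : ℝ, 0 < x → F x =
      ENNReal.ofReal x⁻¹ *
        ∫⁻ z, s.indicator (fun _ => (1:ENNReal)) z * gammaPDF 1 1 (x⁻¹ * z) := by
    intro x hx
    have hset : Prod.mk x ⁻¹' ((fun p : ℝ × ℝ => p.1 * p.2) ⁻¹' s) =
        (fun y => x * y) ⁻¹' s := rfl
    have hsm : MeasurableSet ((fun y => x * y) ⁻¹' s) := measurable_const_mul x hs
    show (expMeasure 1) ((fun y => x * y) ⁻¹' s) = _
    rw [show expMeasure (1:ℝ) = volume.withDensity (gammaPDF 1 1) from rfl,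
      withDensity_apply _ hsm, ← lintegral_indicator hsm]
    have hptw : ∀ y : ℝ, ((fun y => x * y) ⁻¹' s).indicator (gammaPDF 1 1) y =
        (fun z => s.indicator (fun _ => (1:ENNReal)) z * gammaPDF 1 1 (x⁻¹ * z)) (x * y) := by
      intro y
      by_cases hy : x * y ∈ s
      · simp only [Set.indicator_of_mem (show y ∈ (fun y => x*y) ⁻¹' s from hy),
          Set.indicator_of_mem hy, one_mul, inv_mul_cancel_left₀ hx.ne']
      · simp only [Set.indicator_of_notMem (show y ∉ (fun y => x*y) ⁻¹' s from hy),
          Set.indicator_of_notMem hy, zero_mul]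
    calc ∫⁻ y, ((fun y => x * y) ⁻¹' s).indicator (gammaPDF 1 1) y
        = ∫⁻ y, (fun z => s.indicator (fun _ => (1:ENNReal)) z * gammaPDF 1 1 (x⁻¹ * z)) (x * y) := by
          exact lintegral_congr hptw
      _ = ENNReal.ofReal x⁻¹ * ∫⁻ z, s.indicator (fun _ => (1:ENNReal)) z * gammaPDF 1 1 (x⁻¹ * z) := by
          exact lintegral_comp_mul_left _
            (((measurable_one.indicator hs)).mul (hepdfm.comp (measurable_const_mul x⁻¹))) hx
  -- a.e. nonzero
  have h0 : ∀ᵐ (x:ℝ), x ≠ 0 := by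
    have hsing : {x : ℝ | ¬ x ≠ 0} = {0} := by ext; simp
    rw [ae_iff, hsing]
    exact Real.volume_singleton
  -- restrict to Ioi 0
  have hres : ∫⁻ x, (gammaPDF Q 1 * F) x = ∫⁻ x in Set.Ioi 0, gammaPDF Q 1 x * F x := by
    rw [← lintegral_indicator measurableSet_Ioi]
    apply lintegral_congr_ae
    filter_upwards [h0] with x hx0
    rcases (lt_or_gt_of_ne hx0) with hlt | hgt
    · rw [Set.indicator_of_notMem (by simp [Set.mem_Ioi, not_lt, hlt.le])]
      show gammaPDF Q 1 x * F x = 0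
      rw [gammaPDF_of_neg hlt, zero_mul]
    · rw [Set.indicator_of_mem (Set.mem_Ioi.mpr hgt)]
      rfl
  rw [hres]
  -- rewrite inner integral
  have hstep : ∫⁻ x in Set.Ioi 0, gammaPDF Q 1 x * F x =
      ∫⁻ x in Set.Ioi 0, ∫⁻ z, s.indicator (fun _ => (1:ENNReal)) z *
        (gammaPDF Q 1 x * ENNReal.ofReal x⁻¹ * gammaPDF 1 1 (x⁻¹ * z)) := by
    apply setLIntegral_congr_fun measurableSet_Ioi
    intro x hx
    beta_reduce
    rw [hFx x hx, ← mul_assoc,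
      ← lintegral_const_mul' (gammaPDF Q 1 x * ENNReal.ofReal x⁻¹) _
        (ENNReal.mul_ne_top ENNReal.ofReal_ne_top ENNReal.ofReal_ne_top)]
    apply lintegral_congr
    intro z
    ring
  rw [hstep]
  -- Tonelli swap
  have hswap : ∫⁻ x in Set.Ioi (0:ℝ), ∫⁻ z, s.indicator (fun _ => (1:ENNReal)) z *
        (gammaPDF Q 1 x * ENNReal.ofReal x⁻¹ * gammaPDF 1 1 (x⁻¹ * z)) =
      ∫⁻ z, ∫⁻ x in Set.Ioi (0:ℝ), s.indicator (fun _ => (1:ENNReal)) z *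
        (gammaPDF Q 1 x * ENNReal.ofReal x⁻¹ * gammaPDF 1 1 (x⁻¹ * z)) := by
    apply lintegral_lintegral_swap
    apply Measurable.aemeasurable
    exact ((measurable_one.indicator hs).comp measurable_snd).mul
      (((hgpdfm.comp measurable_fst).mul (measurable_fst.inv.ennreal_ofReal)).mul
        (hepdfm.comp (measurable_fst.inv.mul measurable_snd)))
  rw [hswap]
  -- pull indicator out
  have hpull : ∀ z : ℝ, ∫⁻ x in Set.Ioi (0:ℝ), s.indicator (fun _ => (1:ENNReal)) z *
        (gammaPDF Q 1 x * ENNReal.ofReal x⁻¹ * gammaPDF 1 1 (x⁻¹ * z)) =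
      s.indicator (fun _ => (1:ENNReal)) z *
        ∫⁻ x in Set.Ioi (0:ℝ), gammaPDF Q 1 x * ENNReal.ofReal x⁻¹ * gammaPDF 1 1 (x⁻¹ * z) := by
    intro z
    apply lintegral_const_mul'
    by_cases hzm : z ∈ s
    · rw [Set.indicator_of_mem hzm]; exact ENNReal.one_ne_top
    · rw [Set.indicator_of_notMem hzm]; exact ENNReal.zero_ne_top
  simp_rw [hpull]
  -- identify the density
  have hGpos : 0 < Real.Gamma Q := Real.Gamma_pos_of_pos hQR
  have hD : ∀ z : ℝ, z ≠ 0 →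
      (∫⁻ x in Set.Ioi (0:ℝ), gammaPDF Q 1 x * ENNReal.ofReal x⁻¹ * gammaPDF 1 1 (x⁻¹ * z)) =
      ENNReal.ofReal (if 0 < z then
          (2 / Real.Gamma Q) * z ^ (((Q : ℝ) - 1) / 2) * besselK ((Q : ℝ) - 1) (2 * Real.sqrt z)
        else 0) := by
    intro z hz0
    rcases lt_or_gt_of_ne hz0 with hlt | hgt
    · rw [if_neg (not_lt.mpr hlt.le), ENNReal.ofReal_zero]
      rw [setLIntegral_congr_fun measurableSet_Ioi
        (fun x (hx : x ∈ Set.Ioi (0:ℝ)) => by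
          rw [gammaPDF_of_neg (mul_neg_of_pos_of_neg (inv_pos.mpr hx) hlt), mul_zero])]
      exact lintegral_zero
    · rw [if_pos hgt]
      have hptw : ∀ x : ℝ, x ∈ Set.Ioi (0:ℝ) →
          gammaPDF Q 1 x * ENNReal.ofReal x⁻¹ * gammaPDF 1 1 (x⁻¹ * z) =
          ENNReal.ofReal (Real.Gamma Q)⁻¹ *
            ENNReal.ofReal (x ^ ((Q:ℝ) - 1) * Real.exp (-x) * x⁻¹ * Real.exp (-(z / x))) := by
        intro x hx
        have hx0 : (0:ℝ) < x := hx
        have hA : (0:ℝ) ≤ (1:ℝ) ^ (Q:ℝ) / Real.Gamma Q * x ^ ((Q:ℝ)-1) * Real.exp (-x) := by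
          positivity
        have hAB : (0:ℝ) ≤ (1:ℝ) ^ (Q:ℝ) / Real.Gamma Q * x ^ ((Q:ℝ)-1) * Real.exp (-x) * x⁻¹ := by
          positivity
        have hG : (0:ℝ) ≤ (Real.Gamma Q)⁻¹ := by positivity
        rw [gammaPDF_of_nonneg hx0.le, gammaPDF_of_nonneg (by positivity : (0:ℝ) ≤ x⁻¹ * z)]
        simp only [one_mul]
        rw [← ENNReal.ofReal_mul hA, ← ENNReal.ofReal_mul hAB, ← ENNReal.ofReal_mul hG]
        congr 1
        rw [Real.one_rpow, Real.one_rpow, Real.Gamma_one, sub_self, Real.rpow_zero,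
          inv_mul_eq_div]
        ring
      rw [setLIntegral_congr_fun measurableSet_Ioi hptw,
        lintegral_const_mul' _ _ ENNReal.ofReal_ne_top, key_lintegral ((Q:ℝ)-1) hgt,
        ← ENNReal.ofReal_mul (by positivity)]
      congr 1
      rw [div_eq_mul_inv]
      ring
  -- final
  have hfinal : ∫⁻ z, s.indicator (fun _ => (1:ENNReal)) z *
        ∫⁻ x in Set.Ioi (0:ℝ), gammaPDF Q 1 x * ENNReal.ofReal x⁻¹ * gammaPDF 1 1 (x⁻¹ * z) =
      ∫⁻ z, s.indicator (fun z => ENNReal.ofReal (if 0 < z then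
          (2 / Real.Gamma Q) * z ^ (((Q : ℝ) - 1) / 2) * besselK ((Q : ℝ) - 1) (2 * Real.sqrt z)
        else 0)) z := by
    apply lintegral_congr_ae
    filter_upwards [h0] with z hz0
    by_cases hzm : z ∈ s
    · rw [Set.indicator_of_mem hzm, Set.indicator_of_mem hzm, one_mul, hD z hz0]
    · rw [Set.indicator_of_notMem hzm, Set.indicator_of_notMem hzm, zero_mul]
  rw [hfinal, lintegral_indicator hs]
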